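/- Let w be a weight on ℝⁿ, 1 < p < ∞, and let 𝒮 be a family of cubes with pairwise disjoint measurable subsets E_Q ⊆ Q. Then for every nonnegative g, ∑_{Q∈𝒮} ((1/w(3Q)) ∫_Q g)^{p'} w(E_Q) ≤ c_{n,p} ‖g‖_{L^{p'}(σ)}^{p'}, where σ = w^{-1/(p−1)} and p' = p/(p−1). -/

import Mathlib

noncomputable section
open MeasureTheory ENNReal NNReal Set Metric


lemma geom_aux {q : ℝ} (hq : 0 < q) (a : ℝ≥0∞) :
    ∑' k : ℤ, (if (2:ℝ≥0∞) ^ ((k:ℝ) - 1) < a then (2:ℝ≥0∞) ^ ((k:ℝ) * q) else 0)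
      ≤ (2:ℝ≥0∞) ^ q * (1 - (2:ℝ≥0∞) ^ (-q))⁻¹ * a ^ q := by
  have h2top : (2:ℝ≥0∞) ≠ ⊤ := by norm_num
  have h20 : (2:ℝ≥0∞) ≠ 0 := by norm_num
  rcases eq_or_ne a 0 with rfl | ha0
  · have : ∀ k : ℤ, (if (2:ℝ≥0∞) ^ ((k:ℝ) - 1) < 0 then (2:ℝ≥0∞) ^ ((k:ℝ) * q) else 0) = 0 := by
      intro k; simp
    simp [this]
  rcases eq_or_ne a ⊤ with rfl | hatop
  · have h1 : (⊤:ℝ≥0∞) ^ q = ⊤ := ENNReal.top_rpow_of_pos hq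
    have h2 : (2:ℝ≥0∞) ^ q * (1 - (2:ℝ≥0∞) ^ (-q))⁻¹ ≠ 0 := by
      apply mul_ne_zero
      · exact (ENNReal.rpow_pos (by norm_num) h2top).ne'
      · simp only [ne_eq, ENNReal.inv_eq_zero]
        exact (lt_of_le_of_lt (tsub_le_self) one_lt_top).ne
    rw [h1, ENNReal.mul_top h2]
    exact le_top
  -- main case
  set K : ℤ := Int.log 2 a.toNNReal + 1 with hK
  have hann : 0 < a.toNNReal := ENNReal.toNNReal_pos ha0 hatop
  have hcoe : a = (a.toNNReal : ℝ≥0∞) := (ENNReal.coe_toNNReal hatop).symm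
  have hzpow : ∀ m : ℤ, (2:ℝ≥0∞) ^ ((m:ℝ)) = (((2:ℝ≥0) ^ m : ℝ≥0) : ℝ≥0∞) := by
    intro m
    rw [ENNReal.rpow_intCast, ENNReal.coe_zpow (by norm_num : (2:ℝ≥0) ≠ 0)]
    norm_num
  have hK1 : (2:ℝ≥0∞) ^ ((K:ℝ) - 1) ≤ a := by
    have : ((K:ℝ) - 1) = ((K - 1 : ℤ) : ℝ) := by push_cast; ring
    rw [this, hzpow (K - 1)]
    rw [hcoe]
    rw [ENNReal.coe_le_coe]
    have := Int.zpow_log_le_self (b := 2) (by norm_num) hann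
    have hKm : K - 1 = Int.log 2 a.toNNReal := by omega
    rw [hKm]
    exact_mod_cast this
  have hK2 : ∀ k : ℤ, (2:ℝ≥0∞) ^ ((k:ℝ) - 1) < a → k ≤ K := by
    intro k hk
    by_contra hcon
    push_neg at hcon
    have haK : a < (2:ℝ≥0∞) ^ ((K:ℝ)) := by
      rw [hzpow K, hcoe, ENNReal.coe_lt_coe]
      have := Int.lt_zpow_succ_log_self (b := 2) (by norm_num) a.toNNReal
      rw [hK]
      exact_mod_cast this
    have : (2:ℝ≥0∞) ^ ((K:ℝ)) ≤ (2:ℝ≥0∞) ^ ((k:ℝ) - 1) := by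
      apply ENNReal.rpow_le_rpow_of_exponent_le (by norm_num)
      have : (K:ℝ) ≤ (k:ℝ) - 1 := by
        have : K + 1 ≤ k := hcon
        push_cast
        have : (K:ℝ) + 1 ≤ (k:ℝ) := by exact_mod_cast this
        linarith
      exact this
    exact lt_irrefl a ((haK.trans_le this).trans hk)
  set F : ℤ → ℝ≥0∞ := fun k => if (2:ℝ≥0∞) ^ ((k:ℝ) - 1) < a then (2:ℝ≥0∞) ^ ((k:ℝ) * q) else 0 with hF
  have hsupp : Function.support F ⊆ Set.range (fun j : ℕ => K - (j:ℤ)) := by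
    intro k hk
    have : (2:ℝ≥0∞) ^ ((k:ℝ) - 1) < a := by
      by_contra h
      simp [hF, h] at hk
    have hkK := hK2 k this
    refine ⟨(K - k).toNat, ?_⟩
    show K - ((K - k).toNat : ℤ) = k
    omega
  have hinj : Function.Injective (fun j : ℕ => K - (j:ℤ)) := by
    intro j1 j2 h
    simpa using h
  have htsum : ∑' k : ℤ, F k = ∑' j : ℕ, F (K - (j:ℤ)) := (hinj.tsum_eq hsupp).symm
  have hterm : ∀ j : ℕ, F (K - (j:ℤ)) ≤ ((2:ℝ≥0∞) ^ ((K:ℝ) * q)) * ((2:ℝ≥0∞) ^ (-q)) ^ j := by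
    intro j
    have hFj : F (K - (j:ℤ)) = if (2:ℝ≥0∞) ^ ((((K - (j:ℤ)) : ℤ):ℝ) - 1) < a
        then (2:ℝ≥0∞) ^ ((((K - (j:ℤ)) : ℤ):ℝ) * q) else 0 := rfl
    rw [hFj]
    split
    · have h1 : (((K - (j:ℤ) : ℤ) : ℝ)) * q = (K:ℝ) * q + (-q) * (j:ℕ) := by push_cast; ring
      rw [h1, ENNReal.rpow_add _ _ h20 h2top]
      gcongr
      rw [← ENNReal.rpow_natCast ((2:ℝ≥0∞) ^ (-q)) j, ← ENNReal.rpow_mul]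
    · exact zero_le
  have hgeom : ∑' j : ℕ, ((2:ℝ≥0∞) ^ ((K:ℝ) * q)) * ((2:ℝ≥0∞) ^ (-q)) ^ j
      = (2:ℝ≥0∞) ^ ((K:ℝ) * q) * (1 - (2:ℝ≥0∞) ^ (-q))⁻¹ := by
    rw [ENNReal.tsum_mul_left, ENNReal.tsum_geometric]
  have hKq : (2:ℝ≥0∞) ^ ((K:ℝ) * q) ≤ (2:ℝ≥0∞) ^ q * a ^ q := by
    have h2K : (2:ℝ≥0∞) ^ ((K:ℝ)) ≤ 2 * a := by
      have : (K:ℝ) = 1 + ((K:ℝ) - 1) := by ring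
      rw [this, ENNReal.rpow_add _ _ h20 h2top]
      rw [ENNReal.rpow_one]
      exact mul_le_mul_right hK1 2
    calc (2:ℝ≥0∞) ^ ((K:ℝ) * q) = ((2:ℝ≥0∞) ^ ((K:ℝ))) ^ q := by rw [← ENNReal.rpow_mul]
      _ ≤ (2 * a) ^ q := ENNReal.rpow_le_rpow h2K hq.le
      _ = (2:ℝ≥0∞) ^ q * a ^ q := ENNReal.mul_rpow_of_ne_top h2top hatop q
  calc ∑' k : ℤ, F k = ∑' j : ℕ, F (K - (j:ℤ)) := htsum
    _ ≤ ∑' j : ℕ, ((2:ℝ≥0∞) ^ ((K:ℝ) * q)) * ((2:ℝ≥0∞) ^ (-q)) ^ j := ENNReal.tsum_le_tsum hterm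
    _ = (2:ℝ≥0∞) ^ ((K:ℝ) * q) * (1 - (2:ℝ≥0∞) ^ (-q))⁻¹ := hgeom
    _ ≤ ((2:ℝ≥0∞) ^ q * a ^ q) * (1 - (2:ℝ≥0∞) ^ (-q))⁻¹ := mul_le_mul_left hKq _
    _ = (2:ℝ≥0∞) ^ q * (1 - (2:ℝ≥0∞) ^ (-q))⁻¹ * a ^ q := by ring

lemma weak_cover {n : ℕ} {N : ℕ} {τ : ℝ} (hτ : 1 < τ)
    (hN : IsEmpty (Besicovitch.SatelliteConfig (Fin n → ℝ) N τ))
    (μ ν : Measure (Fin n → ℝ)) (s : Set (Fin n → ℝ)) (R : ℝ)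
    (h : ∀ x ∈ s, ∃ r : ℝ, 0 < r ∧ r ≤ R ∧ μ (closedBall x r) ≤ ν (closedBall x r)) :
    μ s ≤ N * ν univ := by
  rcases s.eq_empty_or_nonempty with rfl | hne
  · simp
  choose! r hr0 hrR hrb using h
  let pkg : Besicovitch.BallPackage s (Fin n → ℝ) :=
    { c := fun x => x
      r := fun x => r x
      rpos := fun x => hr0 x x.2
      r_bound := R
      r_le := fun x => hrR x x.2 }
  obtain ⟨u, hu, hcov⟩ := Besicovitch.exist_disjoint_covering_families hτ hN pkg
  have hrange : Set.range pkg.c = s := Subtype.range_val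
  have hcount : ∀ i : Fin N, (u i).Countable := by
    intro i
    refine (hu i).countable_of_nonempty_interior fun j _ => ?_
    exact ⟨j, ball_subset_interior_closedBall (mem_ball_self (hr0 j j.2))⟩
  have key : ∀ i : Fin N, μ (⋃ j ∈ u i, ball (pkg.c j) (pkg.r j)) ≤ ν univ := by
    intro i
    calc μ (⋃ j ∈ u i, ball (pkg.c j) (pkg.r j))
        ≤ μ (⋃ j ∈ u i, closedBall (pkg.c j) (pkg.r j)) := by
          apply measure_mono
          exact iUnion₂_mono fun j _ => ball_subset_closedBall
      _ ≤ ∑' j : (u i), μ (closedBall (pkg.c j) (pkg.r j)) :=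
          measure_biUnion_le μ (hcount i) _
      _ ≤ ∑' j : (u i), ν (closedBall (pkg.c j) (pkg.r j)) :=
          ENNReal.tsum_le_tsum fun j => hrb j.1.1 j.1.2
      _ = ν (⋃ j ∈ u i, closedBall (pkg.c j) (pkg.r j)) :=
          (measure_biUnion (hcount i) (hu i) fun j _ => measurableSet_closedBall).symm
      _ ≤ ν univ := measure_mono (subset_univ _)
  calc μ s = μ (Set.range pkg.c) := by rw [hrange]
    _ ≤ μ (⋃ i : Fin N, ⋃ j ∈ u i, ball (pkg.c j) (pkg.r j)) := measure_mono hcov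
    _ ≤ ∑' i : Fin N, μ (⋃ j ∈ u i, ball (pkg.c j) (pkg.r j)) := measure_iUnion_le _
    _ ≤ ∑' _i : Fin N, ν univ := ENNReal.tsum_le_tsum key
    _ = N * ν univ := by rw [tsum_fintype]; simp [Finset.card_univ, mul_comm]

lemma two_rpow_ne_top (y : ℝ) : (2:ℝ≥0∞) ^ y ≠ ⊤ := by
  rw [show (2:ℝ≥0∞) = ((2:ℝ≥0) : ℝ≥0∞) by norm_num,
    ← ENNReal.coe_rpow_of_ne_zero (by norm_num)]
  exact ENNReal.coe_ne_top

lemma two_rpow_ne_zero (y : ℝ) : (2:ℝ≥0∞) ^ y ≠ 0 :=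
  (ENNReal.rpow_pos (by norm_num) (by norm_num)).ne'

def klog (a : ℝ≥0∞) : ℤ := Int.log 2 a.toNNReal - 1

lemma klog_spec {a : ℝ≥0∞} (ha0 : a ≠ 0) (hat : a ≠ ⊤) :
    (2:ℝ≥0∞) ^ ((klog a : ℤ) : ℝ) < a ∧ a ≤ (2:ℝ≥0∞) ^ (((klog a : ℤ) : ℝ) + 2) := by
  have hann : 0 < a.toNNReal := ENNReal.toNNReal_pos ha0 hat
  have hcoe : a = (a.toNNReal : ℝ≥0∞) := (ENNReal.coe_toNNReal hat).symm
  have hzpow : ∀ m : ℤ, (2:ℝ≥0∞) ^ ((m:ℤ):ℝ) = (((2:ℝ≥0) ^ m : ℝ≥0) : ℝ≥0∞) := by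
    intro m
    rw [ENNReal.rpow_intCast, ENNReal.coe_zpow (by norm_num : (2:ℝ≥0) ≠ 0)]
    norm_num
  constructor
  · calc (2:ℝ≥0∞) ^ ((klog a : ℤ) : ℝ)
        < (2:ℝ≥0∞) ^ ((Int.log 2 a.toNNReal : ℤ) : ℝ) := by
          rw [hzpow, hzpow, ENNReal.coe_lt_coe]
          apply zpow_lt_zpow_right₀ (by norm_num : (1:ℝ≥0) < 2)
          simp [klog]
      _ ≤ a := by
          rw [hzpow, hcoe, ENNReal.coe_le_coe]
          exact_mod_cast Int.zpow_log_le_self (b := 2) (by norm_num) hann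
  · have h1 : ((klog a : ℤ) : ℝ) + 2 = ((Int.log 2 a.toNNReal + 1 : ℤ) : ℝ) := by
      simp [klog]; push_cast; ring
    rw [h1, hzpow, hcoe, ENNReal.coe_le_coe]
    exact_mod_cast (Int.lt_zpow_succ_log_self (b := 2) (by norm_num) a.toNNReal).le

lemma rpow_one_add {β q : ℝ} (hq : 0 < q) (hβ : β = 1 + q) (a : ℝ≥0∞) :
    a * a ^ q = a ^ β := by
  rcases eq_or_ne a 0 with rfl | ha0
  · rw [ENNReal.zero_rpow_of_pos hq, ENNReal.zero_rpow_of_pos (by linarith), mul_zero]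
  rcases eq_or_ne a ⊤ with rfl | hat
  · rw [ENNReal.top_rpow_of_pos hq, ENNReal.top_rpow_of_pos (by linarith), top_mul_top]
  rw [hβ, ENNReal.rpow_add _ _ ha0 hat, ENNReal.rpow_one]

structure Cube (n : ℕ) where
  corner : Fin n → ℝ
  side : ℝ
  side_pos : 0 < side

def Cube.set {n : ℕ} (Q : Cube n) : Set (Fin n → ℝ) :=
  {x | ∀ i, Q.corner i ≤ x i ∧ x i < Q.corner i + Q.side}

def Cube.triple {n : ℕ} (Q : Cube n) : Cube n :=
  ⟨fun i => Q.corner i - Q.side, 3 * Q.side, by linarith [Q.side_pos]⟩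

namespace Cube
variable {n : ℕ} (Q : Cube n)

lemma set_eq_pi : Q.set = Set.pi Set.univ (fun i => Ico (Q.corner i) (Q.corner i + Q.side)) := by
  ext x; simp [Cube.set, Set.mem_pi, Set.mem_Ico]

lemma measurableSet_set : MeasurableSet Q.set := by
  rw [set_eq_pi]
  exact MeasurableSet.univ_pi fun i => measurableSet_Ico

lemma volume_set_pos : 0 < volume Q.set := by
  rw [set_eq_pi, volume_pi_pi]
  rw [pos_iff_ne_zero, Finset.prod_ne_zero_iff]
  intro i _
  rw [Real.volume_Ico]
  simp only [ne_eq, ENNReal.ofReal_eq_zero, not_le]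
  linarith [Q.side_pos]

lemma subset_triple : Q.set ⊆ Q.triple.set := by
  intro x hx i
  obtain ⟨h1, h2⟩ := hx i
  constructor
  · show Q.corner i - Q.side ≤ x i
    linarith [Q.side_pos]
  · show x i < Q.corner i - Q.side + 3 * Q.side
    linarith

lemma subset_closedBall {x : Fin n → ℝ} (hx : x ∈ Q.set) :
    Q.set ⊆ closedBall x Q.side := by
  intro y hy
  rw [mem_closedBall, dist_pi_le_iff Q.side_pos.le]
  intro i
  obtain ⟨hy1, hy2⟩ := hy i
  obtain ⟨hx1, hx2⟩ := hx i
  rw [Real.dist_eq, abs_le]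
  constructor <;> linarith

lemma closedBall_subset_triple {x : Fin n → ℝ} (hx : x ∈ Q.set) :
    closedBall x Q.side ⊆ Q.triple.set := by
  intro y hy
  rw [mem_closedBall] at hy
  intro i
  have hd : |y i - x i| ≤ Q.side := by
    have := dist_le_pi_dist y x i
    rw [Real.dist_eq] at this
    exact this.trans hy
  rw [abs_le] at hd
  obtain ⟨hx1, hx2⟩ := hx i
  constructor
  · show Q.corner i - Q.side ≤ y i
    linarith [hd.1]
  · show y i < Q.corner i - Q.side + 3 * Q.side
    linarith [hd.2]

lemma triple_subset_Icc : Q.triple.set ⊆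
    Set.pi Set.univ (fun i => Icc (Q.corner i - Q.side) (Q.corner i + 2 * Q.side)) := by
  intro x hx
  rw [Set.mem_pi]
  intro i _
  obtain ⟨h1, h2⟩ := hx i
  constructor
  · exact h1
  · show x i ≤ Q.corner i + 2 * Q.side
    have : x i < Q.corner i - Q.side + 3 * Q.side := h2
    linarith

end Cube

/-- for a weight `w` on `ℝⁿ`, `1 < p < ∞`, and a family `𝒮` of cubes with
pairwise disjoint measurable subsets `E_Q ⊆ Q`, every nonnegative `g` satisfies
`∑_{Q∈𝒮} ((1/w(3Q)) ∫_Q g)^{p'} w(E_Q) ≤ c_{n,p} ‖g‖_{L^{p'}(σ)}^{p'}`,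
where `σ = w^{-1/(p-1)}` and `p' = p/(p-1)`. -/
theorem sparse_dual_sum_estimate (n : ℕ) (p : ℝ) (hp : 1 < p) :
    ∃ c : ℝ, 0 < c ∧
      ∀ (w : (Fin n → ℝ) → ℝ), Measurable w → (∀ᵐ x : Fin n → ℝ, 0 < w x) →
        LocallyIntegrable w →
      ∀ (S : Set (Cube n)) (E : Cube n → Set (Fin n → ℝ)),
        (∀ Q ∈ S, E Q ⊆ Q.set) → (∀ Q ∈ S, MeasurableSet (E Q)) →
        S.PairwiseDisjoint E →
      ∀ (g : (Fin n → ℝ) → ℝ≥0∞), Measurable g →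
        ∑' Q : S,
          (((∫⁻ x in (Q : Cube n).triple.set, ENNReal.ofReal (w x))⁻¹ *
              ∫⁻ x in (Q : Cube n).set, g x) ^ (p / (p - 1)) *
            ∫⁻ x in E Q, ENNReal.ofReal (w x)) ≤
        ENNReal.ofReal c *
          ∫⁻ x, g x ^ (p / (p - 1)) * ENNReal.ofReal (w x ^ (-(1 / (p - 1)))) := by
  classical
  obtain ⟨N, τ, hτ, hN⟩ := HasBesicovitchCovering.no_satelliteConfig (α := Fin n → ℝ)
  set q : ℝ := 1 / (p - 1) with hqdef
  set β : ℝ := p / (p - 1) with hβdef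
  have hp1 : 0 < p - 1 := by linarith
  have hq : 0 < q := by positivity
  have hβq : β = 1 + q := by
    rw [hβdef, hqdef]; field_simp; ring
  have hβ1 : 1 < β := by rw [hβq]; linarith
  have hβpos : 0 < β := by linarith
  have hpβ : p.HolderConjugate β := by
    have h := Real.HolderConjugate.conjExponent (p := p) hp
    rwa [Real.conjExponent] at h
  set Cg : ℝ≥0∞ := (2:ℝ≥0∞) ^ q * (1 - (2:ℝ≥0∞) ^ (-q))⁻¹ with hCgdef
  have hCgtop : Cg ≠ ⊤ := by
    apply ENNReal.mul_ne_top (two_rpow_ne_top q)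
    rw [ENNReal.inv_ne_top]
    rw [← pos_iff_ne_zero, tsub_pos_iff_lt]
    exact ENNReal.rpow_lt_one_of_one_lt_of_neg (by norm_num) (by linarith)
  set C : ℝ≥0∞ := (N : ℝ≥0∞) * (2:ℝ≥0∞) ^ (2*β+1) * Cg with hCdef
  have hCtop : C ≠ ⊤ :=
    ENNReal.mul_ne_top (ENNReal.mul_ne_top (ENNReal.natCast_ne_top N) (two_rpow_ne_top _)) hCgtop
  refine ⟨C.toReal + 1, by positivity, ?_⟩
  have hCle : C ≤ ENNReal.ofReal (C.toReal + 1) := by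
    calc C = ENNReal.ofReal C.toReal := (ENNReal.ofReal_toReal hCtop).symm
      _ ≤ _ := ENNReal.ofReal_le_ofReal (by linarith)
  intro w hw hwpos hwloc S E hES hEmeas hdisj g hg
  set h : (Fin n → ℝ) → ℝ≥0∞ := fun x => ENNReal.ofReal (w x) with hhdef
  have hmeas_h : Measurable h := ENNReal.measurable_ofReal.comp hw
  set μ : Measure (Fin n → ℝ) := volume.withDensity h with hμdef
  set f : (Fin n → ℝ) → ℝ≥0∞ := fun x => g x * (h x)⁻¹ with hfdef
  have hf_meas : Measurable f := hg.mul hmeas_h.inv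
  have hgf : ∀ᵐ x : (Fin n → ℝ), f x * h x = g x := by
    filter_upwards [hwpos] with x hx
    have h0 : h x ≠ 0 := by
      simp only [hhdef, ne_eq, ENNReal.ofReal_eq_zero, not_le]; exact hx
    rw [hfdef]
    simp only
    rw [mul_assoc, ENNReal.inv_mul_cancel h0 ENNReal.ofReal_ne_top, mul_one]
  set T : ℝ≥0∞ := ∫⁻ x, g x ^ β * ENNReal.ofReal (w x ^ (-q)) with hTdef
  -- T equals the weighted integral of f^β
  have hTμ : ∫⁻ x, f x ^ β ∂μ = T := by
    rw [hμdef, lintegral_withDensity_eq_lintegral_mul _ hmeas_h (hf_meas.pow_const β)]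
    refine lintegral_congr_ae ?_
    filter_upwards [hwpos] with x hx
    have h0 : h x ≠ 0 := by
      simp only [hhdef, ne_eq, ENNReal.ofReal_eq_zero, not_le]; exact hx
    have htop : h x ≠ ⊤ := ENNReal.ofReal_ne_top
    have hor : ENNReal.ofReal (w x ^ (-q)) = (h x) ^ (-q) := by
      rw [hhdef]
      simp only
      rw [ENNReal.ofReal_rpow_of_pos hx]
    show h x * f x ^ β = g x ^ β * ENNReal.ofReal (w x ^ (-q))
    rcases eq_or_ne (g x) ⊤ with hgx | hgx
    · have hfx : f x = ⊤ := by
        rw [hfdef]; simp only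
        rw [hgx, ENNReal.top_mul (by simp [ENNReal.inv_eq_zero, htop])]
      rw [hfx, hgx, ENNReal.top_rpow_of_pos hβpos, ENNReal.mul_top h0,
        ENNReal.top_mul]
      rw [hor]
      exact (ENNReal.rpow_pos (lt_of_le_of_ne (zero_le) (Ne.symm h0)) htop).ne'
    · have hfβ : f x ^ β = g x ^ β * ((h x) ^ β)⁻¹ := by
        rw [hfdef]
        simp only
        rw [ENNReal.mul_rpow_of_ne_top hgx (by simp [ENNReal.inv_eq_top, h0]),
          ENNReal.inv_rpow]
      rw [hfβ, hor]
      rw [← ENNReal.rpow_neg]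
      calc h x * (g x ^ β * h x ^ (-β)) = g x ^ β * (h x ^ (1:ℝ) * h x ^ (-β)) := by
            rw [ENNReal.rpow_one]; ring
        _ = g x ^ β * h x ^ (-q) := by
            rw [← ENNReal.rpow_add _ _ h0 htop]
            congr 1
            rw [hβq]; ring_nf
  -- trivial case
  rcases eq_or_ne T ⊤ with hT | hT
  · rw [hT, ENNReal.mul_top]
    · exact le_top
    · simp only [ne_eq, ENNReal.ofReal_eq_zero, not_le]
      positivity
  -- abbreviations
  have hμQset : ∀ Q' : Cube n, μ Q'.set = ∫⁻ x in Q'.set, h x ∂volume := fun Q' =>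
    withDensity_apply _ Q'.measurableSet_set
  -- positivity and finiteness of μ on cubes
  have hμpos : ∀ Q' : Cube n, μ Q'.set ≠ 0 := by
    intro Q'
    rw [hμQset Q']
    have hsupp : volume (Function.support h)ᶜ = 0 := by
      rw [ae_iff] at hwpos
      refine measure_mono_null ?_ hwpos
      intro x hx
      simp only [Function.mem_support, not_not, mem_compl_iff] at hx ⊢
      intro hcon
      rw [hhdef] at hx
      simp only [ENNReal.ofReal_eq_zero] at hx
      linarith
    have : 0 < ∫⁻ x in Q'.set, h x ∂volume := by
      rw [lintegral_pos_iff_support hmeas_h]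
      rw [Measure.restrict_apply' Q'.measurableSet_set]
      rw [inter_comm, measure_inter_conull hsupp]
      exact Q'.volume_set_pos
    exact this.ne'
  have hμfin : ∀ Q' : Cube n, μ Q'.triple.set ≠ ⊤ := by
    intro Q'
    set K : Set (Fin n → ℝ) := Set.pi Set.univ
      (fun i => Icc (Q'.corner i - Q'.side) (Q'.corner i + 2 * Q'.side)) with hKdef
    have hK : IsCompact K := isCompact_univ_pi fun i => isCompact_Icc
    have hInt : IntegrableOn w K volume := hwloc.integrableOn_isCompact hK
    have hfin : ∫⁻ x in K, h x ∂volume < ⊤ := by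
      calc ∫⁻ x in K, h x ∂volume ≤ ∫⁻ x in K, ‖w x‖₊ ∂volume :=
            lintegral_mono fun x => Real.ofReal_le_enorm (w x)
        _ < ⊤ := hInt.2
    rw [withDensity_apply _ Q'.triple.measurableSet_set]
    exact (lt_of_le_of_lt (lintegral_mono_set Q'.triple_subset_Icc) hfin).ne
  -- set-integral identity
  have hsetint : ∀ U : Set (Fin n → ℝ), MeasurableSet U →
      ∫⁻ x in U, g x ∂volume = ∫⁻ x in U, f x ∂μ := by
    intro U hU
    rw [hμdef, restrict_withDensity hU,
      lintegral_withDensity_eq_lintegral_mul _ hmeas_h hf_meas]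
    refine lintegral_congr_ae (ae_restrict_of_ae ?_)
    filter_upwards [hgf] with x hx
    show g x = h x * f x
    rw [mul_comm, hx]
  -- rewrite the sum in terms of μ
  have htermeq : ∀ Q : S,
      ((∫⁻ x in (Q : Cube n).triple.set, ENNReal.ofReal (w x))⁻¹ *
              ∫⁻ x in (Q : Cube n).set, g x) ^ β *
            ∫⁻ x in E Q, ENNReal.ofReal (w x)
      = ((μ (Q : Cube n).triple.set)⁻¹ * ∫⁻ x in (Q : Cube n).set, g x) ^ β *
            μ (E Q) := by
    intro Q
    rw [withDensity_apply _ (Q : Cube n).triple.measurableSet_set,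
      withDensity_apply _ (hEmeas _ Q.2)]
  rw [tsum_congr htermeq]
  -- suffices to bound by C * T
  refine le_trans ?_ (mul_le_mul_left hCle T)
  -- reduce to finite subsums
  rw [ENNReal.tsum_eq_iSup_sum]
  refine iSup_le fun A => ?_
  -- bound on side lengths over the finite family
  obtain ⟨R, hRmem⟩ := Finset.exists_le (A.image fun Q => ((Q : S) : Cube n).side)
  have hR : ∀ Q ∈ A, ((Q : S) : Cube n).side ≤ R := fun Q hQ =>
    hRmem _ (Finset.mem_image_of_mem _ hQ)
  set gk : ℤ → (Fin n → ℝ) → ℝ≥0∞ :=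
    fun k => ({y | (2:ℝ≥0∞) ^ ((k:ℝ) - 1) < f y}).indicator g with hgkdef
  set fk : ℤ → (Fin n → ℝ) → ℝ≥0∞ :=
    fun k => ({y | (2:ℝ≥0∞) ^ ((k:ℝ) - 1) < f y}).indicator f with hfkdef
  have hsetmeas : ∀ k : ℤ, MeasurableSet {y | (2:ℝ≥0∞) ^ ((k:ℝ) - 1) < f y} := fun k =>
    measurableSet_lt measurable_const hf_meas
  have hgk_meas : ∀ k, Measurable (gk k) := fun k => hg.indicator (hsetmeas k)
  have hfk_meas : ∀ k, Measurable (fk k) := fun k => hf_meas.indicator (hsetmeas k)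
  set sk : ℤ → Set (Fin n → ℝ) := fun k => {x | ∃ r : ℝ, 0 < r ∧ r ≤ R ∧
    (2:ℝ≥0∞) ^ ((k:ℝ) - 1) * μ (closedBall x r) <
      ∫⁻ y in closedBall x r, gk k y ∂volume} with hskdef
  have hI : ∀ k : ℤ, ∫⁻ y, gk k y ∂volume = ∫⁻ y, fk k y ∂μ := by
    intro k
    rw [hμdef, lintegral_withDensity_eq_lintegral_mul _ hmeas_h (hfk_meas k)]
    refine lintegral_congr_ae ?_
    filter_upwards [hgf] with x hx
    show gk k x = h x * fk k x
    by_cases hmem : x ∈ {y | (2:ℝ≥0∞) ^ ((k:ℝ) - 1) < f y}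
    · rw [hgkdef, hfkdef]
      simp only [Set.indicator_of_mem hmem]
      rw [mul_comm, hx]
    · rw [hgkdef, hfkdef]
      simp only [Set.indicator_of_notMem hmem, mul_zero]
  have hweak : ∀ k : ℤ, μ (sk k) ≤
      (N : ℝ≥0∞) * ((2:ℝ≥0∞) ^ ((k:ℝ) - 1))⁻¹ * ∫⁻ y, fk k y ∂μ := by
    intro k
    have ht0 : (2:ℝ≥0∞) ^ ((k:ℝ) - 1) ≠ 0 := two_rpow_ne_zero _
    have httop : (2:ℝ≥0∞) ^ ((k:ℝ) - 1) ≠ ⊤ := two_rpow_ne_top _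
    have hcov := weak_cover hτ hN (((2:ℝ≥0∞) ^ ((k:ℝ) - 1)) • μ)
      (volume.withDensity (gk k)) (sk k) R ?_
    · rw [Measure.smul_apply, smul_eq_mul] at hcov
      have hν : (volume.withDensity (gk k)) univ = ∫⁻ y, gk k y ∂volume := by
        rw [withDensity_apply _ MeasurableSet.univ, Measure.restrict_univ]
      rw [hν, hI k] at hcov
      calc μ (sk k)
          = ((2:ℝ≥0∞) ^ ((k:ℝ) - 1))⁻¹ * ((2:ℝ≥0∞) ^ ((k:ℝ) - 1) * μ (sk k)) := by
            rw [← mul_assoc, ENNReal.inv_mul_cancel ht0 httop, one_mul]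
        _ ≤ ((2:ℝ≥0∞) ^ ((k:ℝ) - 1))⁻¹ * ((N:ℝ≥0∞) * ∫⁻ y, fk k y ∂μ) :=
            mul_le_mul_right hcov _
        _ = (N:ℝ≥0∞) * ((2:ℝ≥0∞) ^ ((k:ℝ) - 1))⁻¹ * ∫⁻ y, fk k y ∂μ := by ring
    · intro x hx
      obtain ⟨r, hr0, hrR, hlt⟩ := hx
      refine ⟨r, hr0, hrR, ?_⟩
      calc ((2:ℝ≥0∞) ^ ((k:ℝ) - 1) • μ) (closedBall x r)
          = (2:ℝ≥0∞) ^ ((k:ℝ) - 1) * μ (closedBall x r) := by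
            rw [Measure.smul_apply, smul_eq_mul]
        _ ≤ ∫⁻ y in closedBall x r, gk k y ∂volume := hlt.le
        _ = (volume.withDensity (gk k)) (closedBall x r) :=
            (withDensity_apply _ measurableSet_closedBall).symm
  set κ : S → ℤ := fun Q => klog ((μ ((Q : S) : Cube n).triple.set)⁻¹ *
    ∫⁻ x in ((Q : S) : Cube n).set, g x ∂volume) with hκdef
  have key : ∀ Q : S, Q ∈ A → μ (E (Q : Cube n)) ≠ 0 →
      (∫⁻ x in (Q : Cube n).set, g x ∂volume) ≠ 0 →
      (E (Q : Cube n) ⊆ sk (κ Q)) ∧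
        ((μ (Q : Cube n).triple.set)⁻¹ * ∫⁻ x in (Q : Cube n).set, g x ∂volume) ^ β *
            μ (E (Q : Cube n))
          ≤ (2:ℝ≥0∞) ^ ((((κ Q):ℝ) + 2) * β) * μ (E (Q : Cube n)) := by
    intro Q hQA hE0 hg0
    have h30 : μ (Q : Cube n).triple.set ≠ 0 := hμpos _
    have h3top : μ (Q : Cube n).triple.set ≠ ⊤ := hμfin _
    have hIQtop : (∫⁻ x in (Q : Cube n).set, g x ∂volume) ≠ ⊤ := by
      rw [hsetint _ (Q : Cube n).measurableSet_set]
      have e1 : ∫⁻ a in (Q:Cube n).set, f a ∂μ ≤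
          (∫⁻ a in (Q:Cube n).set, f a ^ β ∂μ) ^ (1/β) * (μ ((Q:Cube n).set)) ^ (1/p) := by
        have hh := ENNReal.lintegral_mul_le_Lp_mul_Lq (μ.restrict (Q:Cube n).set)
          hpβ.symm hf_meas.aemeasurable
          (aemeasurable_const : AEMeasurable (fun _ : Fin n → ℝ => (1:ℝ≥0∞)) _)
        simpa [ENNReal.one_rpow] using hh
      have e2 : (∫⁻ a in (Q:Cube n).set, f a ^ β ∂μ) ≤ T := by
        rw [← hTμ]; exact setLIntegral_le_lintegral _ _
      have e3 : μ ((Q:Cube n).set) ≤ μ (Q : Cube n).triple.set :=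
        measure_mono (Q : Cube n).subset_triple
      refine ne_top_of_le_ne_top ?_ (e1.trans (mul_le_mul'
        (ENNReal.rpow_le_rpow e2 (by positivity)) (ENNReal.rpow_le_rpow e3 (by positivity))))
      exact ENNReal.mul_ne_top
        (ENNReal.rpow_ne_top_of_nonneg (by positivity) hT)
        (ENNReal.rpow_ne_top_of_nonneg (by positivity) h3top)
    have hAQ0 : (μ (Q : Cube n).triple.set)⁻¹ *
        (∫⁻ x in (Q : Cube n).set, g x ∂volume) ≠ 0 :=
      mul_ne_zero (ENNReal.inv_ne_zero.2 h3top) hg0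
    have hAQtop : (μ (Q : Cube n).triple.set)⁻¹ *
        (∫⁻ x in (Q : Cube n).set, g x ∂volume) ≠ ⊤ :=
      ENNReal.mul_ne_top (ENNReal.inv_ne_top.2 h30) hIQtop
    obtain ⟨hk1, hk2⟩ := klog_spec hAQ0 hAQtop
    have hκQ : κ Q = klog ((μ (Q : Cube n).triple.set)⁻¹ *
        (∫⁻ x in (Q : Cube n).set, g x ∂volume)) := rfl
    constructor
    · intro x hxE
      have hxQ : x ∈ (Q : Cube n).set := hES _ Q.2 hxE
      have hB1 : (Q : Cube n).set ⊆ closedBall x (Q : Cube n).side :=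
        (Q : Cube n).subset_closedBall hxQ
      have hB2 : closedBall x (Q : Cube n).side ⊆ (Q : Cube n).triple.set :=
        (Q : Cube n).closedBall_subset_triple hxQ
      refine ⟨(Q : Cube n).side, (Q : Cube n).side_pos, hR Q hQA, ?_⟩
      have hthr : (2:ℝ≥0∞) ^ (((κ Q):ℝ)) =
          (2:ℝ≥0∞) ^ (((κ Q):ℝ) - 1) + (2:ℝ≥0∞) ^ (((κ Q):ℝ) - 1) := by
        rw [← two_mul, show ((κ Q):ℝ) = 1 + (((κ Q):ℝ) - 1) by ring,
          ENNReal.rpow_add _ _ (by norm_num) (by norm_num), ENNReal.rpow_one]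
        ring_nf
      have step1 : (2:ℝ≥0∞) ^ (((κ Q):ℝ)) * μ (closedBall x (Q : Cube n).side) <
          ∫⁻ y in closedBall x (Q : Cube n).side, g y ∂volume := by
        calc (2:ℝ≥0∞) ^ (((κ Q):ℝ)) * μ (closedBall x (Q : Cube n).side)
            ≤ (2:ℝ≥0∞) ^ (((κ Q):ℝ)) * μ (Q : Cube n).triple.set :=
              mul_le_mul_right (measure_mono hB2) _
          _ < ∫⁻ y in (Q : Cube n).set, g y ∂volume := by
              rw [hκQ]
              refine (ENNReal.lt_div_iff_mul_lt (Or.inl h30) (Or.inl h3top)).1 ?_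
              rw [div_eq_mul_inv, mul_comm (∫⁻ x in ((Q:S) : Cube n).set, g x ∂volume)
                (μ ((Q:S) : Cube n).triple.set)⁻¹]
              exact hk1
          _ ≤ ∫⁻ y in closedBall x (Q : Cube n).side, g y ∂volume := lintegral_mono_set hB1
      have hμB : μ (closedBall x (Q : Cube n).side) =
          ∫⁻ y in closedBall x (Q : Cube n).side, h y ∂volume :=
        withDensity_apply _ measurableSet_closedBall
      have step2 : ∫⁻ y in closedBall x (Q : Cube n).side, g y ∂volume ≤
          (∫⁻ y in closedBall x (Q : Cube n).side, gk (κ Q) y ∂volume) +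
            (2:ℝ≥0∞) ^ (((κ Q):ℝ) - 1) * μ (closedBall x (Q : Cube n).side) := by
        calc ∫⁻ y in closedBall x (Q : Cube n).side, g y ∂volume
            ≤ ∫⁻ y in closedBall x (Q : Cube n).side,
                (gk (κ Q) y + (2:ℝ≥0∞) ^ (((κ Q):ℝ) - 1) * h y) ∂volume := by
              refine lintegral_mono_ae (ae_restrict_of_ae ?_)
              filter_upwards [hgf] with y hy
              by_cases hmem : y ∈ {z | (2:ℝ≥0∞) ^ ((((κ Q):ℤ):ℝ) - 1) < f z}
              · rw [hgkdef]
                simp only [Set.indicator_of_mem hmem]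
                exact le_self_add
              · have hfy : f y ≤ (2:ℝ≥0∞) ^ ((((κ Q):ℤ):ℝ) - 1) := not_lt.1 hmem
                have hgy : g y ≤ (2:ℝ≥0∞) ^ (((κ Q):ℝ) - 1) * h y := by
                  rw [← hy]
                  exact mul_le_mul_left hfy _
                rw [hgkdef]
                simp only [Set.indicator_of_notMem hmem, zero_add]
                exact hgy
          _ = _ := by
              rw [lintegral_add_left (hgk_meas (κ Q)), lintegral_const_mul _ hmeas_h, ← hμB]
      show (2:ℝ≥0∞) ^ (((κ Q):ℝ) - 1) * μ (closedBall x (Q : Cube n).side) <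
          ∫⁻ y in closedBall x (Q : Cube n).side, gk (κ Q) y ∂volume
      by_contra hcon
      push_neg at hcon
      have hle : ∫⁻ y in closedBall x (Q : Cube n).side, g y ∂volume ≤
          (2:ℝ≥0∞) ^ (((κ Q):ℝ)) * μ (closedBall x (Q : Cube n).side) := by
        calc ∫⁻ y in closedBall x (Q : Cube n).side, g y ∂volume
            ≤ _ := step2
          _ ≤ (2:ℝ≥0∞) ^ (((κ Q):ℝ) - 1) * μ (closedBall x (Q : Cube n).side) +
              (2:ℝ≥0∞) ^ (((κ Q):ℝ) - 1) * μ (closedBall x (Q : Cube n).side) :=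
              add_le_add_left hcon _
          _ = (2:ℝ≥0∞) ^ (((κ Q):ℝ)) * μ (closedBall x (Q : Cube n).side) := by
              rw [← add_mul, ← hthr]
      exact absurd step1 (not_lt.2 hle)
    · calc ((μ (Q : Cube n).triple.set)⁻¹ * ∫⁻ x in (Q : Cube n).set, g x ∂volume) ^ β *
            μ (E (Q : Cube n))
          ≤ ((2:ℝ≥0∞) ^ ((((κ Q):ℝ)) + 2)) ^ β * μ (E (Q : Cube n)) := by
            refine mul_le_mul_left (ENNReal.rpow_le_rpow ?_ hβpos.le) _
            rw [hκQ]; exact hk2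
        _ = (2:ℝ≥0∞) ^ ((((κ Q):ℝ) + 2) * β) * μ (E (Q : Cube n)) := by
            rw [← ENNReal.rpow_mul]
  -- filter out zero terms
  set A' : Finset S := A.filter (fun Q => μ (E (Q : Cube n)) ≠ 0 ∧
    (∫⁻ x in (Q : Cube n).set, g x ∂volume) ≠ 0) with hA'def
  have hfilter : ∑ Q ∈ A,
      ((μ (Q : Cube n).triple.set)⁻¹ * ∫⁻ x in (Q : Cube n).set, g x ∂volume) ^ β *
        μ (E (Q : Cube n))
      = ∑ Q ∈ A',
      ((μ (Q : Cube n).triple.set)⁻¹ * ∫⁻ x in (Q : Cube n).set, g x ∂volume) ^ β *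
        μ (E (Q : Cube n)) := by
    refine (Finset.sum_filter_of_ne ?_).symm
    intro Q hQ hne
    constructor
    · intro h0
      exact hne (by rw [h0, mul_zero])
    · intro h0
      exact hne (by rw [h0, mul_zero, ENNReal.zero_rpow_of_pos hβpos, zero_mul])
  have hmemA' : ∀ Q ∈ A', Q ∈ A ∧ μ (E (Q : Cube n)) ≠ 0 ∧
      (∫⁻ x in (Q : Cube n).set, g x ∂volume) ≠ 0 := by
    intro Q hQ
    obtain ⟨h1, h2⟩ := Finset.mem_filter.1 hQ
    exact ⟨h1, h2⟩
  calc ∑ Q ∈ A,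
      ((μ (Q : Cube n).triple.set)⁻¹ * ∫⁻ x in (Q : Cube n).set, g x ∂volume) ^ β *
        μ (E (Q : Cube n))
      = ∑ Q ∈ A',
      ((μ (Q : Cube n).triple.set)⁻¹ * ∫⁻ x in (Q : Cube n).set, g x ∂volume) ^ β *
        μ (E (Q : Cube n)) := hfilter
    _ ≤ ∑ Q ∈ A', (2:ℝ≥0∞) ^ ((((κ Q):ℝ) + 2) * β) * μ (E (Q : Cube n)) := by
        refine Finset.sum_le_sum fun Q hQ => ?_
        obtain ⟨hQA, h1, h2⟩ := hmemA' Q hQ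
        exact (key Q hQA h1 h2).2
    _ = ∑ k ∈ A'.image κ, ∑ Q ∈ A'.filter (fun Q => κ Q = k),
          (2:ℝ≥0∞) ^ ((((κ Q):ℝ) + 2) * β) * μ (E (Q : Cube n)) :=
        (Finset.sum_fiberwise_of_maps_to (fun Q hQ => Finset.mem_image_of_mem _ hQ) _).symm
    _ ≤ ∑ k ∈ A'.image κ, (2:ℝ≥0∞) ^ (((k:ℝ) + 2) * β) * μ (sk k) := by
        refine Finset.sum_le_sum fun k _ => ?_
        have hre : ∑ Q ∈ A'.filter (fun Q => κ Q = k),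
            (2:ℝ≥0∞) ^ ((((κ Q):ℝ) + 2) * β) * μ (E (Q : Cube n))
            = (2:ℝ≥0∞) ^ (((k:ℝ) + 2) * β) *
              ∑ Q ∈ A'.filter (fun Q => κ Q = k), μ (E (Q : Cube n)) := by
          rw [Finset.mul_sum]
          refine Finset.sum_congr rfl fun Q hQ => ?_
          rw [(Finset.mem_filter.1 hQ).2]
        rw [hre]
        refine mul_le_mul_right ?_ _
        have hdisj' : Set.PairwiseDisjoint (↑(A'.filter (fun Q => κ Q = k)))
            (fun Q : S => E (Q : Cube n)) := by
          intro Q _ Q' _ hne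
          exact hdisj Q.2 Q'.2 (fun hh => hne (Subtype.ext hh))
        rw [← measure_biUnion_finset hdisj' (fun Q _ => hEmeas _ Q.2)]
        refine measure_mono (Set.iUnion₂_subset fun Q hQ => ?_)
        obtain ⟨hQA', hκeq⟩ := Finset.mem_filter.1 hQ
        obtain ⟨hQA, h1, h2⟩ := hmemA' Q hQA'
        have hsub := (key Q hQA h1 h2).1
        rwa [hκeq] at hsub
    _ ≤ ∑' k : ℤ, (2:ℝ≥0∞) ^ (((k:ℝ) + 2) * β) * μ (sk k) := ENNReal.sum_le_tsum _
    _ ≤ C * T := ?_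
  -- the tail estimate
  have tailco : ∀ k : ℤ, (2:ℝ≥0∞) ^ (((k:ℝ) + 2) * β) * ((2:ℝ≥0∞) ^ ((k:ℝ) - 1))⁻¹
      = (2:ℝ≥0∞) ^ (2*β+1) * (2:ℝ≥0∞) ^ ((k:ℝ) * q) := by
    intro k
    rw [← ENNReal.rpow_neg, ← ENNReal.rpow_add _ _ (by norm_num) (by norm_num),
      ← ENNReal.rpow_add _ _ (by norm_num) (by norm_num)]
    congr 1
    rw [hβq]
    ring
  have tailbound : ∀ k : ℤ, (2:ℝ≥0∞) ^ (((k:ℝ) + 2) * β) * μ (sk k) ≤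
      (N:ℝ≥0∞) * (2:ℝ≥0∞) ^ (2*β+1) * ((2:ℝ≥0∞) ^ ((k:ℝ) * q) * ∫⁻ y, fk k y ∂μ) := by
    intro k
    calc (2:ℝ≥0∞) ^ (((k:ℝ) + 2) * β) * μ (sk k)
        ≤ (2:ℝ≥0∞) ^ (((k:ℝ) + 2) * β) *
            ((N:ℝ≥0∞) * ((2:ℝ≥0∞) ^ ((k:ℝ) - 1))⁻¹ * ∫⁻ y, fk k y ∂μ) :=
          mul_le_mul_right (hweak k) _
      _ = ((2:ℝ≥0∞) ^ (((k:ℝ) + 2) * β) * ((2:ℝ≥0∞) ^ ((k:ℝ) - 1))⁻¹) *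
            ((N:ℝ≥0∞) * ∫⁻ y, fk k y ∂μ) := by ring
      _ = (N:ℝ≥0∞) * (2:ℝ≥0∞) ^ (2*β+1) * ((2:ℝ≥0∞) ^ ((k:ℝ) * q) * ∫⁻ y, fk k y ∂μ) := by
          rw [tailco k]; ring
  have hptwise : ∀ y : Fin n → ℝ, ∑' k : ℤ, (2:ℝ≥0∞) ^ ((k:ℝ) * q) * fk k y ≤
      Cg * f y ^ β := by
    intro y
    calc ∑' k : ℤ, (2:ℝ≥0∞) ^ ((k:ℝ) * q) * fk k y
        = f y * ∑' k : ℤ,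
            (if (2:ℝ≥0∞) ^ ((k:ℝ) - 1) < f y then (2:ℝ≥0∞) ^ ((k:ℝ) * q) else 0) := by
          rw [← ENNReal.tsum_mul_left]
          refine tsum_congr fun k => ?_
          rw [hfkdef]
          by_cases hmem : y ∈ {z | (2:ℝ≥0∞) ^ ((k:ℝ) - 1) < f z}
          · have hc : (2:ℝ≥0∞) ^ ((k:ℝ) - 1) < f y := hmem
            simp only [Set.indicator_of_mem hmem, if_pos hc]
            ring
          · have hc : ¬ ((2:ℝ≥0∞) ^ ((k:ℝ) - 1) < f y) := hmem
            simp only [Set.indicator_of_notMem hmem, if_neg hc, mul_zero]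
      _ ≤ f y * ((2:ℝ≥0∞) ^ q * (1 - (2:ℝ≥0∞) ^ (-q))⁻¹ * f y ^ q) :=
          mul_le_mul_right (geom_aux hq (f y)) _
      _ = Cg * (f y * f y ^ q) := by rw [hCgdef]; ring
      _ = Cg * f y ^ β := by rw [rpow_one_add hq hβq]
  calc ∑' k : ℤ, (2:ℝ≥0∞) ^ (((k:ℝ) + 2) * β) * μ (sk k)
      ≤ ∑' k : ℤ, (N:ℝ≥0∞) * (2:ℝ≥0∞) ^ (2*β+1) *
          ((2:ℝ≥0∞) ^ ((k:ℝ) * q) * ∫⁻ y, fk k y ∂μ) := ENNReal.tsum_le_tsum tailbound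
    _ = (N:ℝ≥0∞) * (2:ℝ≥0∞) ^ (2*β+1) *
          ∑' k : ℤ, (2:ℝ≥0∞) ^ ((k:ℝ) * q) * ∫⁻ y, fk k y ∂μ := ENNReal.tsum_mul_left
    _ ≤ (N:ℝ≥0∞) * (2:ℝ≥0∞) ^ (2*β+1) * (Cg * T) := by
        refine mul_le_mul_right ?_ _
        have h1 : ∀ k : ℤ, (2:ℝ≥0∞) ^ ((k:ℝ) * q) * ∫⁻ y, fk k y ∂μ
            = ∫⁻ y, (2:ℝ≥0∞) ^ ((k:ℝ) * q) * fk k y ∂μ :=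
          fun k => (lintegral_const_mul _ (hfk_meas k)).symm
        calc ∑' k : ℤ, (2:ℝ≥0∞) ^ ((k:ℝ) * q) * ∫⁻ y, fk k y ∂μ
            = ∑' k : ℤ, ∫⁻ y, (2:ℝ≥0∞) ^ ((k:ℝ) * q) * fk k y ∂μ := tsum_congr h1
          _ = ∫⁻ y, ∑' k : ℤ, (2:ℝ≥0∞) ^ ((k:ℝ) * q) * fk k y ∂μ :=
              (lintegral_tsum fun k => ((hfk_meas k).const_mul _).aemeasurable).symm
          _ ≤ ∫⁻ y, Cg * f y ^ β ∂μ := lintegral_mono hptwise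
          _ = Cg * ∫⁻ y, f y ^ β ∂μ := lintegral_const_mul _ (hf_meas.pow_const β)
          _ = Cg * T := by rw [hTμ]
    _ = C * T := by rw [hCdef]; ring


-- #print axioms check
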